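/- Let r ≥ 1, N ≥ 2, let c_1,…,c_N be pairwise distinct complex constants, and let A_1,…,A_N : U → M_r(ℂ) be holomorphic on a connected open set U ⊆ ℂ^N satisfying Garnier's autonomous system. Then Garnier's system is isospectral: for every λ ∈ ℂ \ {c_1,…,c_N} and every μ ∈ ℂ, the function t ↦ det(M(λ,t) − μ I) is constant on U. -/

import Mathlib

open Matrix Finset

attribute [local instance] Matrix.normedAddCommGroup Matrix.normedSpace

/-- det as a continuous multilinear map in the rows. -/
noncomputable def garnierDetCM (r : ℕ) :
    ContinuousMultilinearMap ℂ (fun _ : Fin r => (Fin r → ℂ)) ℂ :=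
  { (Matrix.detRowAlternating : (Fin r → ℂ) [⋀^Fin r]→ₗ[ℂ] ℂ).toMultilinearMap with
    cont := by
      have : Continuous fun m : Matrix (Fin r) (Fin r) ℂ => m.det :=
        continuous_id.matrix_det
      exact this }

lemma garnierDetCM_apply {r : ℕ} (m : Fin r → Fin r → ℂ) :
    garnierDetCM r m = (Matrix.of m).det := rfl

lemma garnier_sumDet {r : ℕ} (X H : Matrix (Fin r) (Fin r) ℂ) :
    ∑ i, (X.updateRow i (H i)).det = Matrix.trace (X.adjugate * H) := by
  have key : ∀ i, (X.updateRow i (H i)).det = ∑ j, H i j * X.adjugate j i := by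
    intro i
    have hb : H i = ∑ j, H i j • (Pi.single j 1 : Fin r → ℂ) := by
      funext j
      simp [Pi.single_apply, Finset.sum_apply, mul_ite]
    calc (X.updateRow i (H i)).det
        = Matrix.detRowAlternating
            (Function.update X i (∑ j, H i j • (Pi.single j 1 : Fin r → ℂ))) := by
          rw [← hb]; rfl
      _ = ∑ j, Matrix.detRowAlternating
            (Function.update X i (H i j • (Pi.single j 1 : Fin r → ℂ))) :=
          MultilinearMap.map_update_sum _ Finset.univ i _ X
      _ = ∑ j, H i j * X.adjugate j i := by
          refine Finset.sum_congr rfl fun j _ => ?_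
          show (X.updateRow i (H i j • (Pi.single j 1 : Fin r → ℂ))).det = _
          rw [Matrix.det_updateRow_smul, Matrix.adjugate_apply]
  rw [Matrix.trace]
  simp only [key, Matrix.diag, Matrix.mul_apply]
  rw [Finset.sum_comm]
  exact Finset.sum_congr rfl fun i _ => Finset.sum_congr rfl fun j _ => mul_comm _ _

lemma garnier_trace_comm {r : ℕ} (X B : Matrix (Fin r) (Fin r) ℂ) :
    Matrix.trace (X.adjugate * (X * B - B * X)) = 0 := by
  rw [Matrix.mul_sub, Matrix.trace_sub, ← Matrix.mul_assoc, Matrix.adjugate_mul,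
    ← Matrix.mul_assoc, Matrix.trace_mul_comm (X.adjugate * B) X, ← Matrix.mul_assoc,
    Matrix.mul_adjugate, sub_self]

theorem garnier_isospectral
    (r N : ℕ) (hr : 1 ≤ r) (hN : 2 ≤ N)
    (c : Fin N → ℂ) (hc : ∀ i j : Fin N, i ≠ j → c i ≠ c j)
    (U : Set (Fin N → ℂ)) (hUo : IsOpen U) (hUc : IsConnected U)
    (A : Fin N → (Fin N → ℂ) → Matrix (Fin r) (Fin r) ℂ)
    (hA : ∀ i, DifferentiableOn ℂ (A i) U)
    (hGar : ∀ i j : Fin N, ∀ t ∈ U,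
        (i ≠ j → fderiv ℂ (A i) t (Pi.single j 1)
            = (c i - c j)⁻¹ • ⁅A i t, A j t⁆) ∧
        fderiv ℂ (A i) t (Pi.single i 1)
            = -∑ k ∈ Finset.univ.erase i, (c i - c k)⁻¹ • ⁅A i t, A k t⁆) :
    ∀ z : ℂ, (∀ k : Fin N, z ≠ c k) → ∀ μ : ℂ, ∀ t ∈ U, ∀ t' ∈ U,
      (∑ k, (z - c k)⁻¹ • A k t - μ • (1 : Matrix (Fin r) (Fin r) ℂ)).det
        = (∑ k, (z - c k)⁻¹ • A k t' - μ • (1 : Matrix (Fin r) (Fin r) ℂ)).det := by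
  intro z hz μ
  have hzc : ∀ k, z - c k ≠ 0 := fun k => sub_ne_zero.2 (hz k)
  set M : (Fin N → ℂ) → Matrix (Fin r) (Fin r) ℂ :=
    fun t => ∑ k, (z - c k)⁻¹ • A k t with hM
  set f : (Fin N → ℂ) → ℂ := fun t => (M t - μ • (1 : Matrix (Fin r) (Fin r) ℂ)).det with hfdef
  show ∀ t ∈ U, ∀ t' ∈ U, f t = f t'
  -- derivative of M
  have hdM : ∀ t ∈ U, HasFDerivAt (fun x => M x - μ • (1 : Matrix (Fin r) (Fin r) ℂ))
      (∑ k, (z - c k)⁻¹ • fderiv ℂ (A k) t) t := by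
    intro t ht
    have h1 : HasFDerivAt M (∑ k, (z - c k)⁻¹ • fderiv ℂ (A k) t) t := by
      apply HasFDerivAt.fun_sum
      intro k _
      exact (((hA k).differentiableAt (hUo.mem_nhds ht)).hasFDerivAt).const_smul ((z - c k)⁻¹ : ℂ)
    exact h1.sub_const _
  -- the Lax-pair computation
  have hkey : ∀ t ∈ U, ∀ j : Fin N,
      (∑ k, (z - c k)⁻¹ • fderiv ℂ (A k) t) (Pi.single j 1)
        = (z - c j)⁻¹ • (M t * A j t - A j t * M t) := by
    intro t ht j
    have expand : (∑ k, (z - c k)⁻¹ • fderiv ℂ (A k) t) (Pi.single j 1)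
        = ∑ k, (z - c k)⁻¹ • fderiv ℂ (A k) t (Pi.single j 1) := by
      simp
    have hMAj : M t * A j t - A j t * M t
        = ∑ k ∈ Finset.univ.erase j, (z - c k)⁻¹ • ⁅A k t, A j t⁆ := by
      have h0 : M t * A j t - A j t * M t = ∑ k, (z - c k)⁻¹ • ⁅A k t, A j t⁆ := by
        simp only [hM, Matrix.sum_mul, Matrix.mul_sum, Matrix.smul_mul, Matrix.mul_smul,
          Ring.lie_def, smul_sub, ← Finset.sum_sub_distrib]
      rw [h0]
      rw [Finset.sum_erase _ (by simp [Ring.lie_def])]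
    rw [expand, ← Finset.sum_erase_add _ _ (Finset.mem_univ j), (hGar j j t ht).2, hMAj]
    have h1 : ∑ k ∈ Finset.univ.erase j, (z - c k)⁻¹ • fderiv ℂ (A k) t (Pi.single j 1)
        = ∑ k ∈ Finset.univ.erase j, (z - c k)⁻¹ • ((c k - c j)⁻¹ • ⁅A k t, A j t⁆) :=
      Finset.sum_congr rfl fun k hk => by
        rw [(hGar k j t ht).1 (Finset.ne_of_mem_erase hk)]
    have h2 : (z - c j)⁻¹ • -(∑ k ∈ Finset.univ.erase j, (c j - c k)⁻¹ • ⁅A j t, A k t⁆)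
        = ∑ k ∈ Finset.univ.erase j, (z - c j)⁻¹ • ((c j - c k)⁻¹ • ⁅A k t, A j t⁆) := by
      rw [← Finset.sum_neg_distrib, Finset.smul_sum]
      exact Finset.sum_congr rfl fun k _ => by rw [← smul_neg, Ring.lie_def, Ring.lie_def, neg_sub]
    rw [h1, h2, Finset.smul_sum, ← Finset.sum_add_distrib]
    refine Finset.sum_congr rfl fun k hk => ?_
    have hkj : k ≠ j := Finset.ne_of_mem_erase hk
    have hckj : c k - c j ≠ 0 := sub_ne_zero.2 (hc k j hkj)
    have hcjk : c j - c k ≠ 0 := sub_ne_zero.2 (hc j k hkj.symm)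
    rw [smul_smul, smul_smul, smul_smul, ← add_smul]
    congr 1
    have e1 : (c j - c k)⁻¹ = -(c k - c j)⁻¹ := by rw [← neg_sub (c k) (c j), inv_neg]
    have e2 : (z - c k)⁻¹ - (z - c j)⁻¹ = (c k - c j) * ((z - c k)⁻¹ * (z - c j)⁻¹) := by
      rw [inv_sub_inv (hzc k) (hzc j), div_eq_mul_inv, mul_inv]
      ring
    calc (z - c k)⁻¹ * (c k - c j)⁻¹ + (z - c j)⁻¹ * (c j - c k)⁻¹
        = ((z - c k)⁻¹ - (z - c j)⁻¹) * (c k - c j)⁻¹ := by rw [e1]; ring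
      _ = (c k - c j) * ((z - c k)⁻¹ * (z - c j)⁻¹) * (c k - c j)⁻¹ := by rw [e2]
      _ = (z - c j)⁻¹ * (z - c k)⁻¹ := by
          rw [mul_comm (c k - c j) _, mul_assoc, mul_inv_cancel₀ hckj, mul_one, mul_comm]
  -- derivative of f is zero
  have hf0 : ∀ t ∈ U, HasFDerivAt f (0 : (Fin N → ℂ) →L[ℂ] ℂ) t := by
    intro t ht
    set Φ : (Fin N → ℂ) →L[ℂ] Matrix (Fin r) (Fin r) ℂ :=
      ∑ k, (z - c k)⁻¹ • fderiv ℂ (A k) t with hΦ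
    set X : Matrix (Fin r) (Fin r) ℂ := M t - μ • 1 with hX
    have hrows : ∀ i : Fin r, HasFDerivAt
        (fun x => (M x - μ • (1 : Matrix (Fin r) (Fin r) ℂ)) i)
        ((ContinuousLinearMap.proj (R := ℂ) (φ := fun _ : Fin r => Fin r → ℂ) i).comp Φ) t :=
      fun i => (ContinuousLinearMap.proj (R := ℂ)
        (φ := fun _ : Fin r => Fin r → ℂ) i).hasFDerivAt.comp t (hdM t ht)
    set Ψ : (Fin N → ℂ) →L[ℂ] ℂ := ∑ i : Fin r, ((garnierDetCM r).toContinuousLinearMap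
        (fun j => (M t - μ • (1 : Matrix (Fin r) (Fin r) ℂ)) j) i).comp
        ((ContinuousLinearMap.proj (R := ℂ) (φ := fun _ : Fin r => Fin r → ℂ) i).comp Φ) with hΨ
    have hcomp : HasFDerivAt
        (fun x => garnierDetCM r (fun i => (M x - μ • (1 : Matrix (Fin r) (Fin r) ℂ)) i)) Ψ t :=
      HasFDerivAt.multilinear_comp (garnierDetCM r) hrows
    have hΨ0 : Ψ = 0 := by
      ext v
      have hval : Ψ v = ∑ i : Fin r, (X.updateRow i (Φ v i)).det := by
        simp only [hΨ, ContinuousLinearMap.sum_apply, ContinuousLinearMap.comp_apply,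
          ContinuousMultilinearMap.toContinuousLinearMap_apply]
        rfl
      rw [ContinuousLinearMap.zero_apply, hval, garnier_sumDet]
      have hv : v = ∑ j, v j • (Pi.single j 1 : Fin N → ℂ) := by
        funext i
        simp [Pi.single_apply, Finset.sum_apply, mul_ite]
      have hΦv : Φ v = ∑ j, v j • Φ (Pi.single j 1) := by
        conv_lhs => rw [hv]
        rw [map_sum]
        exact Finset.sum_congr rfl fun j _ => Φ.map_smul _ _
      rw [hΦv, Matrix.mul_sum, Matrix.trace_sum]
      refine Finset.sum_eq_zero fun j _ => ?_
      have hcommX : M t * A j t - A j t * M t = X * A j t - A j t * X := by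
        simp only [hX, sub_mul, mul_sub, Matrix.smul_mul, Matrix.mul_smul, one_mul, mul_one]
        abel
      have hΦj : Φ (Pi.single j 1) = (z - c j)⁻¹ • (X * A j t - A j t * X) := by
        rw [hΦ, hkey t ht j, hcommX]
      rw [hΦj, Matrix.mul_smul, Matrix.mul_smul, Matrix.trace_smul, Matrix.trace_smul,
        garnier_trace_comm, smul_zero, smul_zero]
    simp only [garnierDetCM_apply] at hcomp
    have hfun : (fun x => (Matrix.of fun i => (M x - μ • (1 : Matrix (Fin r) (Fin r) ℂ)) i).det)
        = f := by
      funext x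
      congr 1
    rw [hfun] at hcomp
    rwa [hΨ0] at hcomp
  clear_value f M
  -- local constancy + connectedness
  have hlc : IsLocallyConstant (fun x : U => f x) := by
    rw [IsLocallyConstant.iff_exists_open]
    rintro ⟨x, hx⟩
    obtain ⟨ε, hε, hball⟩ := Metric.isOpen_iff.1 hUo x hx
    refine ⟨(Subtype.val ⁻¹' Metric.ball x ε : Set U), ?_, ?_, ?_⟩
    · exact Metric.isOpen_ball.preimage continuous_subtype_val
    · exact Set.mem_preimage.mpr (Metric.mem_ball_self hε)
    · rintro ⟨y, hy⟩ hyb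
      have hyb' : y ∈ Metric.ball x ε := Set.mem_preimage.mp hyb
      have hconv : Convex ℝ (Metric.ball x ε) := convex_ball x ε
      have hdiff : DifferentiableOn ℂ f (Metric.ball x ε) := fun w hw =>
        (hf0 w (hball hw)).differentiableAt.differentiableWithinAt
      have hzero : ∀ w ∈ Metric.ball x ε, fderivWithin ℂ f (Metric.ball x ε) w = 0 := by
        intro w hw
        rw [fderivWithin_of_isOpen Metric.isOpen_ball hw, (hf0 w (hball hw)).fderiv]
      exact hconv.is_const_of_fderivWithin_eq_zero hdiff hzero hyb' (Metric.mem_ball_self hε)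
  intro t ht t' ht'
  have : PreconnectedSpace U := Subtype.preconnectedSpace hUc.isPreconnected
  exact hlc.apply_eq_of_isPreconnected isPreconnected_univ (Set.mem_univ ⟨t, ht⟩)
    (Set.mem_univ ⟨t', ht'⟩)
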